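/- Let c be a d×d real symmetric matrix with simple eigenvalue λʳ and unit eigenvector qʳ. Then the eigenvector map c ↦ qʳ(c) is differentiable and ∂_{jk} qʳ(c) = (λʳ I_d − c)† (∂_{jk} c) qʳ, where † denotes the Moore–Penrose pseudoinverse; equivalently ∂_{jk} qʳ(c) = Σ_{v≠r} (qᵛⱼ qʳₖ)/(λʳ − λᵛ) · qᵛ. -/

import Mathlib

open Matrix Filter

attribute [local instance] Matrix.frobeniusNormedAddCommGroup Matrix.frobeniusNormedSpace

/-- The four Penrose conditions characterizing the Moore–Penrose pseudoinverse. -/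
def IsMoorePenroseInverse {d : ℕ} (A P : Matrix (Fin d) (Fin d) ℝ) : Prop :=
  A * P * A = A ∧ P * A * P = P ∧ (A * P)ᵀ = A * P ∧ (P * A)ᵀ = P * A

namespace EigDeriv

variable {d : ℕ}

lemma mp_unique {A P1 P2 : Matrix (Fin d) (Fin d) ℝ}
    (h1 : IsMoorePenroseInverse A P1) (h2 : IsMoorePenroseInverse A P2) : P1 = P2 := by
  obtain ⟨a1, b1, c1, d1⟩ := h1
  obtain ⟨a2, b2, c2, d2⟩ := h2
  have k1 : (A * P2) * (A * P1) = A * P1 := by rw [← Matrix.mul_assoc, a2]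
  have k2 : (A * P1) * (A * P2) = A * P2 := by rw [← Matrix.mul_assoc, a1]
  have k3 : (P1 * A) * (P2 * A) = P1 * A := by
    rw [Matrix.mul_assoc P1 A, ← Matrix.mul_assoc A, a2]
  have k4 : (P2 * A) * (P1 * A) = P2 * A := by
    rw [Matrix.mul_assoc P2 A, ← Matrix.mul_assoc A, a1]
  have hAP : A * P1 = A * P2 := by
    calc A * P1 = ((A * P2) * (A * P1))ᵀ := by rw [k1, c1]
    _ = (A * P1)ᵀ * (A * P2)ᵀ := Matrix.transpose_mul _ _
    _ = (A * P1) * (A * P2) := by rw [c1, c2]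
    _ = A * P2 := k2
  have hPA : P1 * A = P2 * A := by
    calc P1 * A = ((P1 * A) * (P2 * A))ᵀ := by rw [k3, d1]
    _ = (P2 * A)ᵀ * (P1 * A)ᵀ := Matrix.transpose_mul _ _
    _ = (P2 * A) * (P1 * A) := by rw [d1, d2]
    _ = P2 * A := k4
  calc P1 = P1 * A * P1 := b1.symm
  _ = P1 * (A * P1) := Matrix.mul_assoc _ _ _
  _ = P1 * (A * P2) := by rw [hAP]
  _ = (P1 * A) * P2 := (Matrix.mul_assoc _ _ _).symm
  _ = (P2 * A) * P2 := by rw [hPA]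
  _ = P2 := b2

/-- `Q * diagonal g * Qᵀ` -/
def Mg (Q : Matrix (Fin d) (Fin d) ℝ) (g : Fin d → ℝ) : Matrix (Fin d) (Fin d) ℝ :=
  Q * Matrix.diagonal g * Qᵀ

lemma Mg_mul {Q : Matrix (Fin d) (Fin d) ℝ} (hQ1 : Qᵀ * Q = 1) (g g' : Fin d → ℝ) :
    Mg Q g * Mg Q g' = Mg Q (g * g') := by
  unfold Mg
  have h : Qᵀ * (Q * (Matrix.diagonal g' * Qᵀ)) = Matrix.diagonal g' * Qᵀ := by
    rw [← Matrix.mul_assoc, hQ1, Matrix.one_mul]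
  simp only [Matrix.mul_assoc]
  rw [h, ← Matrix.mul_assoc (Matrix.diagonal g), Matrix.diagonal_mul_diagonal]
  rfl

lemma Mg_transpose {Q : Matrix (Fin d) (Fin d) ℝ} (g : Fin d → ℝ) : (Mg Q g)ᵀ = Mg Q g := by
  unfold Mg
  rw [Matrix.transpose_mul, Matrix.transpose_mul, Matrix.transpose_transpose,
    Matrix.diagonal_transpose, Matrix.mul_assoc]

lemma Mg_one {Q : Matrix (Fin d) (Fin d) ℝ} (hQ2 : Q * Qᵀ = 1) : Mg Q 1 = 1 := by
  unfold Mg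
  have : (1 : Fin d → ℝ) = fun _ => (1:ℝ) := rfl
  rw [this, Matrix.diagonal_one, Matrix.mul_one, hQ2]

lemma Mg_mulVec {Q : Matrix (Fin d) (Fin d) ℝ} (hQ1 : Qᵀ * Q = 1) (g : Fin d → ℝ) (v : Fin d) :
    Mg Q g *ᵥ (fun i => Q i v) = g v • fun i => Q i v := by
  have h1 : (fun i => Q i v) = Q *ᵥ Pi.single v 1 := by
    funext i
    simp [Matrix.mulVec, dotProduct, Pi.single_apply]
  rw [h1, Mg, ← Matrix.mulVec_mulVec, ← Matrix.mulVec_mulVec]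
  have h2 : Qᵀ *ᵥ (Q *ᵥ Pi.single v 1) = Pi.single v 1 := by
    rw [Matrix.mulVec_mulVec, hQ1, Matrix.one_mulVec]
  rw [h2]
  have h3 : Matrix.diagonal g *ᵥ Pi.single v 1 = g v • (Pi.single v 1 : Fin d → ℝ) := by
    funext i
    simp [Matrix.mulVec, dotProduct, Pi.single_apply, Matrix.diagonal]
    by_cases h : i = v <;> simp [h]
  rw [h3, Matrix.mulVec_smul]

lemma q_dot_q {Q : Matrix (Fin d) (Fin d) ℝ} (hQ1 : Qᵀ * Q = 1) (v w : Fin d) :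
    (fun i => Q i v) ⬝ᵥ (fun i => Q i w) = if v = w then 1 else 0 := by
  have h := congrFun (congrFun hQ1 v) w
  simp only [Matrix.mul_apply, Matrix.one_apply, Matrix.transpose_apply] at h
  simpa [dotProduct] using h

lemma Mg_sub (Q : Matrix (Fin d) (Fin d) ℝ) (g g' : Fin d → ℝ) :
    Mg Q (g - g') = Mg Q g - Mg Q g' := by
  unfold Mg
  have h : (g - g') = fun v => g v - g' v := rfl
  rw [h, ← Matrix.diagonal_sub, Matrix.mul_sub, Matrix.sub_mul]

lemma diag_const (a : ℝ) : Matrix.diagonal (fun _ : Fin d => a) = a • (1 : Matrix (Fin d) (Fin d) ℝ) := by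
  ext i j
  by_cases h : i = j <;>
    simp [Matrix.diagonal_apply, Matrix.one_apply, h]

lemma Mg_apply (Q : Matrix (Fin d) (Fin d) ℝ) (g : Fin d → ℝ) (i j : Fin d) :
    Mg Q g i j = ∑ v, Q i v * g v * Q j v := by
  rw [Mg, Matrix.mul_apply]
  refine Finset.sum_congr rfl fun v _ => ?_
  rw [Matrix.mul_diagonal, Matrix.transpose_apply]


/-- eigenvalue gap inverses -/
noncomputable def g0 (lam : Fin d → ℝ) (r : Fin d) : Fin d → ℝ :=
  fun v => if v = r then 0 else (lam v - lam r)⁻¹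

def Nmat (Q : Matrix (Fin d) (Fin d) ℝ) (lam : Fin d → ℝ) (r : Fin d) :=
  Mg Q (fun v => lam v - lam r)

noncomputable def Pmat (Q : Matrix (Fin d) (Fin d) ℝ) (lam : Fin d → ℝ) (r : Fin d) := Mg Q (g0 lam r)

def pimat (Q : Matrix (Fin d) (Fin d) ℝ) (r : Fin d) := Mg Q (Pi.single r 1)

variable {Q : Matrix (Fin d) (Fin d) ℝ} {lam : Fin d → ℝ} {r : Fin d}

lemma Nmat_eq (hQ2 : Q * Qᵀ = 1) : Nmat Q lam r = Mg Q lam - lam r • 1 := by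
  have h : Nmat Q lam r = Mg Q (lam - fun _ => lam r) := rfl
  rw [h, Mg_sub]
  congr 1
  unfold Mg
  rw [diag_const, Matrix.mul_smul, Matrix.smul_mul, Matrix.mul_one, hQ2]

lemma Nmat_mulVec (hQ2 : Q * Qᵀ = 1) (x : Fin d → ℝ) :
    Nmat Q lam r *ᵥ x = Mg Q lam *ᵥ x - lam r • x := by
  rw [Nmat_eq hQ2, Matrix.sub_mulVec, Matrix.smul_mulVec, Matrix.one_mulVec]

lemma PN_eq (hQ1 : Qᵀ * Q = 1) (hQ2 : Q * Qᵀ = 1)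
    (hsimple : ∀ v : Fin d, v ≠ r → lam v ≠ lam r) :
    Pmat Q lam r * Nmat Q lam r = 1 - pimat Q r := by
  rw [Pmat, Nmat, Mg_mul hQ1]
  have h1 : (1 : Matrix (Fin d) (Fin d) ℝ) - pimat Q r = Mg Q (1 - Pi.single r 1) := by
    rw [Mg_sub, Mg_one hQ2, pimat]
  have harg : (g0 lam r * fun v => lam v - lam r) = (1 : Fin d → ℝ) - Pi.single r 1 := by
    funext v
    simp only [Pi.mul_apply, Pi.sub_apply, Pi.one_apply]
    rw [g0, Pi.single_apply]
    by_cases h : v = r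
    · simp [h]
    · have hne : lam v - lam r ≠ 0 := sub_ne_zero.mpr (hsimple v h)
      simp [h, inv_mul_cancel₀ hne]
  rw [h1, harg]

lemma NP_eq (hQ1 : Qᵀ * Q = 1) (hQ2 : Q * Qᵀ = 1)
    (hsimple : ∀ v : Fin d, v ≠ r → lam v ≠ lam r) :
    Nmat Q lam r * Pmat Q lam r = 1 - pimat Q r := by
  rw [Pmat, Nmat, Mg_mul hQ1]
  have h1 : (1 : Matrix (Fin d) (Fin d) ℝ) - pimat Q r = Mg Q (1 - Pi.single r 1) := by
    rw [Mg_sub, Mg_one hQ2, pimat]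
  have harg : ((fun v => lam v - lam r) * g0 lam r) = (1 : Fin d → ℝ) - Pi.single r 1 := by
    funext v
    simp only [Pi.mul_apply, Pi.sub_apply, Pi.one_apply]
    rw [g0, Pi.single_apply]
    by_cases h : v = r
    · simp [h]
    · have hne : lam v - lam r ≠ 0 := sub_ne_zero.mpr (hsimple v h)
      simp [h, mul_inv_cancel₀ hne]
  rw [h1, harg]

lemma pimat_apply (i j : Fin d) : pimat Q r i j = Q i r * Q j r := by
  rw [pimat, Mg_apply]
  rw [Finset.sum_eq_single r (fun v _ hv => by simp [Pi.single_apply, hv]) (by simp)]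
  simp

lemma pimat_mulVec (x : Fin d → ℝ) :
    pimat Q r *ᵥ x = ((fun i => Q i r) ⬝ᵥ x) • (fun i => Q i r) := by
  funext i
  simp only [Matrix.mulVec, dotProduct, pimat_apply, Pi.smul_apply, smul_eq_mul]
  rw [Finset.sum_congr rfl (fun j _ => by ring_nf : ∀ j ∈ Finset.univ, Q i r * Q j r * x j = Q i r * (Q j r * x j)), ← Finset.mul_sum]
  ring

lemma Nmat_mulVec_q (hQ1 : Qᵀ * Q = 1) : Nmat Q lam r *ᵥ (fun i => Q i r) = 0 := by
  rw [Nmat, Mg_mulVec hQ1]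
  simp

lemma Pmat_mulVec_q (hQ1 : Qᵀ * Q = 1) : Pmat Q lam r *ᵥ (fun i => Q i r) = 0 := by
  rw [Pmat, Mg_mulVec hQ1]
  simp [g0]

lemma dot_mulVec_zero {M : Matrix (Fin d) (Fin d) ℝ} (hsym : Mᵀ = M)
    (hq : M *ᵥ (fun i => Q i r) = 0) (x : Fin d → ℝ) :
    (fun i => Q i r) ⬝ᵥ (M *ᵥ x) = 0 := by
  rw [Matrix.dotProduct_mulVec]
  have h : (fun i => Q i r) ᵥ* M = 0 := by
    rw [← hsym, Matrix.vecMul_transpose, hq]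
  rw [h, zero_dotProduct]


lemma Nmat_transpose : (Nmat Q lam r)ᵀ = Nmat Q lam r := Mg_transpose _
lemma Pmat_transpose : (Pmat Q lam r)ᵀ = Pmat Q lam r := Mg_transpose _

/-- the forward linear map: derivative of the eigen-system map -/
noncomputable def fwdLin (c : Matrix (Fin d) (Fin d) ℝ) (lr : ℝ) (q : Fin d → ℝ) :
    (Matrix (Fin d) (Fin d) ℝ × ℝ × (Fin d → ℝ)) →ₗ[ℝ]
      (Matrix (Fin d) (Fin d) ℝ × (Fin d → ℝ) × ℝ) where
  toFun p := (p.1, (c *ᵥ p.2.2 + p.1 *ᵥ q) - (lr • p.2.2 + p.2.1 • q), q ⬝ᵥ p.2.2)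
  map_add' p p' := by
    refine Prod.ext rfl (Prod.ext ?_ ?_)
    · show (c *ᵥ (p.2.2 + p'.2.2) + (p.1 + p'.1) *ᵥ q) -
        (lr • (p.2.2 + p'.2.2) + (p.2.1 + p'.2.1) • q) = _
      rw [Matrix.mulVec_add, Matrix.add_mulVec, smul_add, add_smul]
      show _ = ((c *ᵥ p.2.2 + p.1 *ᵥ q) - (lr • p.2.2 + p.2.1 • q)) +
        ((c *ᵥ p'.2.2 + p'.1 *ᵥ q) - (lr • p'.2.2 + p'.2.1 • q))
      abel
    · show q ⬝ᵥ (p.2.2 + p'.2.2) = q ⬝ᵥ p.2.2 + q ⬝ᵥ p'.2.2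
      rw [dotProduct_add]
  map_smul' a p := by
    refine Prod.ext rfl (Prod.ext ?_ ?_)
    · show (c *ᵥ (a • p.2.2) + (a • p.1) *ᵥ q) - (lr • (a • p.2.2) + (a * p.2.1) • q) =
        a • ((c *ᵥ p.2.2 + p.1 *ᵥ q) - (lr • p.2.2 + p.2.1 • q))
      rw [Matrix.mulVec_smul, Matrix.smul_mulVec]
      module
    · show q ⬝ᵥ (a • p.2.2) = a • (q ⬝ᵥ p.2.2)
      rw [dotProduct_smul]

/-- candidate inverse of the derivative -/
def invFun0 (P : Matrix (Fin d) (Fin d) ℝ) (q : Fin d → ℝ) :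
    (Matrix (Fin d) (Fin d) ℝ × (Fin d → ℝ) × ℝ) →
      (Matrix (Fin d) (Fin d) ℝ × ℝ × (Fin d → ℝ)) :=
  fun w => (w.1, q ⬝ᵥ (w.1 *ᵥ q) - q ⬝ᵥ w.2.1,
    w.2.2 • q + P *ᵥ (w.2.1 - w.1 *ᵥ q))

section equiv
variable (hQ1 : Qᵀ * Q = 1) (hQ2 : Q * Qᵀ = 1)
  (hsimple : ∀ v : Fin d, v ≠ r → lam v ≠ lam r)
include hQ1 hQ2 hsimple

lemma left_inv_aux (p : Matrix (Fin d) (Fin d) ℝ × ℝ × (Fin d → ℝ)) :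
    invFun0 (Pmat Q lam r) (fun i => Q i r)
      (fwdLin (Mg Q lam) (lam r) (fun i => Q i r) p) = p := by
  obtain ⟨H, ν, h⟩ := p
  set q : Fin d → ℝ := fun i => Q i r with hq
  have e1 : (Mg Q lam *ᵥ h + H *ᵥ q) - (lam r • h + ν • q)
      = Nmat Q lam r *ᵥ h + (H *ᵥ q - ν • q) := by
    rw [Nmat_mulVec hQ2]; abel
  refine Prod.ext rfl (Prod.ext ?_ ?_)
  · show q ⬝ᵥ (H *ᵥ q) - q ⬝ᵥ ((Mg Q lam *ᵥ h + H *ᵥ q) - (lam r • h + ν • q)) = ν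
    rw [e1, dotProduct_add, dot_mulVec_zero Nmat_transpose (Nmat_mulVec_q hQ1),
      dotProduct_sub, dotProduct_smul, q_dot_q hQ1]
    simp
  · show (q ⬝ᵥ h) • q + Pmat Q lam r *ᵥ
        (((Mg Q lam *ᵥ h + H *ᵥ q) - (lam r • h + ν • q)) - H *ᵥ q) = h
    have e2 : ((Mg Q lam *ᵥ h + H *ᵥ q) - (lam r • h + ν • q)) - H *ᵥ q
        = Nmat Q lam r *ᵥ h - ν • q := by
      rw [Nmat_mulVec hQ2]; abel
    rw [e2, Matrix.mulVec_sub, Matrix.mulVec_smul, Pmat_mulVec_q hQ1,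
      Matrix.mulVec_mulVec, PN_eq hQ1 hQ2 hsimple, Matrix.sub_mulVec, Matrix.one_mulVec,
      pimat_mulVec, smul_zero]
    abel

lemma right_inv_aux (w : Matrix (Fin d) (Fin d) ℝ × (Fin d → ℝ) × ℝ) :
    fwdLin (Mg Q lam) (lam r) (fun i => Q i r)
      (invFun0 (Pmat Q lam r) (fun i => Q i r) w) = w := by
  obtain ⟨H, y, t⟩ := w
  set q : Fin d → ℝ := fun i => Q i r with hq
  set h' : Fin d → ℝ := t • q + Pmat Q lam r *ᵥ (y - H *ᵥ q) with hh'
  have e4 : Nmat Q lam r *ᵥ h'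
      = (y - H *ᵥ q) - ((q ⬝ᵥ y - q ⬝ᵥ (H *ᵥ q))) • q := by
    rw [hh', Matrix.mulVec_add, Matrix.mulVec_smul, Nmat_mulVec_q hQ1,
      Matrix.mulVec_mulVec, NP_eq hQ1 hQ2 hsimple, Matrix.sub_mulVec, Matrix.one_mulVec,
      pimat_mulVec, smul_zero, zero_add, dotProduct_sub]
  have e5 : Mg Q lam *ᵥ h' = Nmat Q lam r *ᵥ h' + lam r • h' := by
    rw [Nmat_mulVec hQ2]; abel
  refine Prod.ext rfl (Prod.ext ?_ ?_)
  · show (Mg Q lam *ᵥ h' + H *ᵥ q) -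
      (lam r • h' + (q ⬝ᵥ (H *ᵥ q) - q ⬝ᵥ y) • q) = y
    rw [e5, e4, sub_smul, sub_smul]
    abel
  · show q ⬝ᵥ h' = t
    rw [hh', dotProduct_add, dotProduct_smul, q_dot_q hQ1,
      dot_mulVec_zero Pmat_transpose (Pmat_mulVec_q hQ1)]
    simp

/-- the derivative as a linear equivalence -/
noncomputable def Leq : (Matrix (Fin d) (Fin d) ℝ × ℝ × (Fin d → ℝ)) ≃ₗ[ℝ]
    (Matrix (Fin d) (Fin d) ℝ × (Fin d → ℝ) × ℝ) where
  toLinearMap := fwdLin (Mg Q lam) (lam r) (fun i => Q i r)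
  invFun := invFun0 (Pmat Q lam r) (fun i => Q i r)
  left_inv := left_inv_aux hQ1 hQ2 hsimple
  right_inv := right_inv_aux hQ1 hQ2 hsimple

end equiv

noncomputable def mulVecCLM (d : ℕ) :
    Matrix (Fin d) (Fin d) ℝ →L[ℝ] (Fin d → ℝ) →L[ℝ] (Fin d → ℝ) :=
  LinearMap.toContinuousLinearMap
    { toFun := fun A => LinearMap.toContinuousLinearMap A.mulVecLin
      map_add' := fun A B => by
        ext x i
        simp [Matrix.mulVecLin_apply, Matrix.add_mulVec]
      map_smul' := fun a A => by
        ext x i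
        simp [Matrix.mulVecLin_apply, Matrix.smul_mulVec] }

@[simp] lemma mulVecCLM_apply {d : ℕ} (A : Matrix (Fin d) (Fin d) ℝ) (x : Fin d → ℝ) :
    mulVecCLM d A x = A *ᵥ x := by
  simp [mulVecCLM, Matrix.mulVecLin_apply]

noncomputable def dotCLM {d : ℕ} (q : Fin d → ℝ) : (Fin d → ℝ) →L[ℝ] ℝ :=
  LinearMap.toContinuousLinearMap
    { toFun := fun x => q ⬝ᵥ x
      map_add' := fun x y => dotProduct_add q x y
      map_smul' := fun a x => by simp [dotProduct_smul] }

@[simp] lemma dotCLM_apply {d : ℕ} (q x : Fin d → ℝ) : dotCLM q x = q ⬝ᵥ x := by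
  simp [dotCLM]

lemma Mg_def (Q : Matrix (Fin d) (Fin d) ℝ) (g : Fin d → ℝ) :
    Mg Q g = Q * Matrix.diagonal g * Qᵀ := rfl

lemma pimat_transpose {Q : Matrix (Fin d) (Fin d) ℝ} {r : Fin d} :
    (pimat Q r)ᵀ = pimat Q r := Mg_transpose _

section equiv2
variable {Q : Matrix (Fin d) (Fin d) ℝ} {lam : Fin d → ℝ} {r : Fin d}
variable (hQ1 : Qᵀ * Q = 1) (hQ2 : Q * Qᵀ = 1)
  (hsimple : ∀ v : Fin d, v ≠ r → lam v ≠ lam r)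

lemma Leq_apply (p : Matrix (Fin d) (Fin d) ℝ × ℝ × (Fin d → ℝ)) :
    Leq hQ1 hQ2 hsimple p = fwdLin (Mg Q lam) (lam r) (fun i => Q i r) p := rfl

lemma Leq_symm_apply (w : Matrix (Fin d) (Fin d) ℝ × (Fin d → ℝ) × ℝ) :
    (Leq hQ1 hQ2 hsimple).symm w = invFun0 (Pmat Q lam r) (fun i => Q i r) w := rfl

lemma fwdLin_apply (c : Matrix (Fin d) (Fin d) ℝ) (lr : ℝ) (q : Fin d → ℝ)
    (p : Matrix (Fin d) (Fin d) ℝ × ℝ × (Fin d → ℝ)) :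
    fwdLin c lr q p
      = (p.1, (c *ᵥ p.2.2 + p.1 *ᵥ q) - (lr • p.2.2 + p.2.1 • q), q ⬝ᵥ p.2.2) := rfl

lemma Mg_zero : Mg Q (0 : Fin d → ℝ) = 0 := by
  have h : Matrix.diagonal (0 : Fin d → ℝ) = 0 := Matrix.diagonal_zero
  simp [Mg, h]

lemma piN_zero (hQ1 : Qᵀ * Q = 1) : pimat Q r * Nmat Q lam r = 0 := by
  rw [pimat, Nmat, Mg_mul hQ1]
  have h : (Pi.single r 1 * fun v => lam v - lam r) = (0 : Fin d → ℝ) := by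
    funext v
    simp only [Pi.mul_apply, Pi.zero_apply]
    by_cases hv : v = r
    · simp [hv]
    · simp [Pi.single_apply, hv]
  rw [h, Mg_zero]

lemma Npi_zero (hQ1 : Qᵀ * Q = 1) : Nmat Q lam r * pimat Q r = 0 := by
  rw [pimat, Nmat, Mg_mul hQ1]
  have h : ((fun v => lam v - lam r) * Pi.single r 1) = (0 : Fin d → ℝ) := by
    funext v
    simp only [Pi.mul_apply, Pi.zero_apply]
    by_cases hv : v = r
    · simp [hv]
    · simp [Pi.single_apply, hv]
  rw [h, Mg_zero]

lemma piP_zero (hQ1 : Qᵀ * Q = 1) : pimat Q r * Pmat Q lam r = 0 := by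
  rw [pimat, Pmat, Mg_mul hQ1]
  have h : (Pi.single r 1 * g0 lam r) = (0 : Fin d → ℝ) := by
    funext v
    simp only [Pi.mul_apply, Pi.zero_apply]
    by_cases hv : v = r
    · simp [hv, g0]
    · simp [Pi.single_apply, hv]
  rw [h, Mg_zero]

lemma Ppi_zero (hQ1 : Qᵀ * Q = 1) : Pmat Q lam r * pimat Q r = 0 := by
  rw [pimat, Pmat, Mg_mul hQ1]
  have h : (g0 lam r * Pi.single r 1) = (0 : Fin d → ℝ) := by
    funext v
    simp only [Pi.mul_apply, Pi.zero_apply]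
    by_cases hv : v = r
    · simp [hv, g0]
    · simp [Pi.single_apply, hv]
  rw [h, Mg_zero]

lemma mp_neg (hQ1 : Qᵀ * Q = 1) (hQ2 : Q * Qᵀ = 1)
    (hsimple : ∀ v : Fin d, v ≠ r → lam v ≠ lam r) :
    IsMoorePenroseInverse (lam r • (1 : Matrix (Fin d) (Fin d) ℝ) - Mg Q lam)
      (-(Pmat Q lam r)) := by
  have hA : lam r • (1 : Matrix (Fin d) (Fin d) ℝ) - Mg Q lam = -(Nmat Q lam r) := by
    rw [Nmat_eq hQ2, neg_sub]
  rw [hA]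
  have hNP := NP_eq hQ1 hQ2 hsimple
  have hPN := PN_eq hQ1 hQ2 hsimple
  refine ⟨?_, ?_, ?_, ?_⟩
  · rw [neg_mul_neg, hNP, Matrix.sub_mul, Matrix.one_mul, Matrix.mul_neg,
      piN_zero hQ1, neg_zero, sub_zero]
  · rw [neg_mul_neg, hPN, Matrix.sub_mul, Matrix.one_mul, Matrix.mul_neg,
      piP_zero hQ1, neg_zero, sub_zero]
  · rw [neg_mul_neg, hNP, Matrix.transpose_sub, Matrix.transpose_one, pimat_transpose]
  · rw [neg_mul_neg, hPN, Matrix.transpose_sub, Matrix.transpose_one, pimat_transpose]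

lemma sum_formula (j k : Fin d) :
    -(Pmat Q lam r *ᵥ (Matrix.single j k (1:ℝ) *ᵥ fun i => Q i r))
      = ∑ v ∈ Finset.univ.filter (fun v => v ≠ r),
          ((Q j v * Q k r) / (lam r - lam v)) • (fun i => Q i v) := by
  have hE : (Matrix.single j k (1:ℝ) *ᵥ fun i => Q i r)
      = fun i => if j = i then Q k r else 0 := by
    funext i
    simp [Matrix.mulVec, dotProduct, Matrix.single, ite_and]
  funext i
  rw [Pi.neg_apply, hE]
  have hPv : (Pmat Q lam r *ᵥ fun i' => if j = i' then Q k r else 0) i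
      = Pmat Q lam r i j * Q k r := by
    simp [Matrix.mulVec, dotProduct, mul_ite, mul_zero]
  rw [hPv]
  have hPij : Pmat Q lam r i j = ∑ v, Q i v * g0 lam r v * Q j v := Mg_apply Q _ i j
  rw [hPij, Finset.sum_apply, Finset.sum_filter, Finset.sum_mul, ← Finset.sum_neg_distrib]
  refine Finset.sum_congr rfl fun v _ => ?_
  by_cases hv : v = r
  · simp [hv, g0]
  · have h1 : lam r - lam v = -(lam v - lam r) := by ring
    simp only [hv, if_true, ne_eq, not_false_iff, Pi.smul_apply, smul_eq_mul, g0, if_false]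
    rw [div_eq_mul_inv, h1, inv_neg]
    ring

end equiv2

end EigDeriv

open EigDeriv in
/-- For a simple eigenvalue `λʳ` of a symmetric matrix `c` with unit eigenvector `qʳ`,
the eigenvector map is differentiable at `c` with
`∂_{jk} qʳ(c) = (λʳ I − c)† E_{jk} qʳ = Σ_{v≠r} (qᵛⱼ qʳₖ)/(λʳ − λᵛ) qᵛ`. -/
theorem eigenvector_simple_derivative
    (d : ℕ) (c Q : Matrix (Fin d) (Fin d) ℝ) (lam : Fin d → ℝ) (r : Fin d)
    (hsymm : c.IsSymm)
    (hQ : Q ∈ Matrix.orthogonalGroup (Fin d) ℝ)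
    (hfact : c = Q * Matrix.diagonal lam * Qᵀ)
    (hsimple : ∀ v : Fin d, v ≠ r → lam v ≠ lam r) :
    ∃ (lamf : Matrix (Fin d) (Fin d) ℝ → ℝ)
      (f : Matrix (Fin d) (Fin d) ℝ → (Fin d → ℝ)),
      DifferentiableAt ℝ lamf c ∧ DifferentiableAt ℝ f c ∧
      lamf c = lam r ∧ (∀ i, f c i = Q i r) ∧
      (∀ᶠ A in nhds c, A.IsSymm → A *ᵥ f A = lamf A • f A) ∧
      (∀ j k : Fin d,
        (∀ P : Matrix (Fin d) (Fin d) ℝ,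
            IsMoorePenroseInverse (lam r • (1 : Matrix (Fin d) (Fin d) ℝ) - c) P →
            fderiv ℝ f c (Matrix.single j k 1)
              = P *ᵥ (Matrix.single j k (1 : ℝ) *ᵥ fun i => Q i r)) ∧
        fderiv ℝ f c (Matrix.single j k 1)
          = ∑ v ∈ Finset.univ.filter (fun v => v ≠ r),
              ((Q j v * Q k r) / (lam r - lam v)) • (fun i => Q i v)) := by
  classical
  have hQ1 : Qᵀ * Q = 1 := by
    have h1 := (Matrix.mem_orthogonalGroup_iff' (Fin d) ℝ).mp hQ
    simpa [Matrix.star_eq_conjTranspose, Matrix.conjTranspose] using h1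
  have hQ2 : Q * Qᵀ = 1 := by
    have h2 := (Matrix.mem_orthogonalGroup_iff (Fin d) ℝ).mp hQ
    simpa [Matrix.star_eq_conjTranspose, Matrix.conjTranspose] using h2
  subst hfact
  rw [← Mg_def Q lam]
  set q : Fin d → ℝ := fun i => Q i r with hqdef
  set pt : (Matrix (Fin d) (Fin d) ℝ) × ℝ × (Fin d → ℝ) := (Mg Q lam, lam r, q) with hpt
  set Φ : (Matrix (Fin d) (Fin d) ℝ) × ℝ × (Fin d → ℝ) → (Matrix (Fin d) (Fin d) ℝ) × (Fin d → ℝ) × ℝ :=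
    fun p => (p.1, mulVecCLM d p.1 p.2.2
      - ContinuousLinearMap.lsmul ℝ ℝ p.2.1 p.2.2, dotCLM q p.2.2) with hΦdef
  set Deq := (Leq hQ1 hQ2 hsimple).toContinuousLinearEquiv with hDeq
  have h1 : HasStrictFDerivAt (fun p : (Matrix (Fin d) (Fin d) ℝ) × ℝ × (Fin d → ℝ) => p.1)
      (ContinuousLinearMap.fst ℝ (Matrix (Fin d) (Fin d) ℝ) (ℝ × (Fin d → ℝ))) pt := hasStrictFDerivAt_fst
  have h22 : HasStrictFDerivAt (fun p : (Matrix (Fin d) (Fin d) ℝ) × ℝ × (Fin d → ℝ) => p.2.2)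
      ((ContinuousLinearMap.snd ℝ ℝ (Fin d → ℝ)).comp
        (ContinuousLinearMap.snd ℝ (Matrix (Fin d) (Fin d) ℝ) (ℝ × (Fin d → ℝ)))) pt :=
    hasStrictFDerivAt_snd.comp pt hasStrictFDerivAt_snd
  have h21 : HasStrictFDerivAt (fun p : (Matrix (Fin d) (Fin d) ℝ) × ℝ × (Fin d → ℝ) => p.2.1)
      ((ContinuousLinearMap.fst ℝ ℝ (Fin d → ℝ)).comp
        (ContinuousLinearMap.snd ℝ (Matrix (Fin d) (Fin d) ℝ) (ℝ × (Fin d → ℝ)))) pt :=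
    hasStrictFDerivAt_fst.comp pt hasStrictFDerivAt_snd
  have hB := (mulVecCLM d).hasStrictFDerivAt_of_bilinear h1 h22
  have hS := (ContinuousLinearMap.lsmul ℝ ℝ :
      ℝ →L[ℝ] (Fin d → ℝ) →L[ℝ] (Fin d → ℝ)).hasStrictFDerivAt_of_bilinear h21 h22
  have hdot := (dotCLM q).hasStrictFDerivAt.comp pt h22
  have hBS : HasStrictFDerivAt _ _ pt := hB.sub hS
  have hX := hBS.prodMk hdot
  have hΦ0 := h1.prodMk hX
  have repl : ∀ {D1 D2 : ((Matrix (Fin d) (Fin d) ℝ) × ℝ × (Fin d → ℝ)) →L[ℝ] ((Matrix (Fin d) (Fin d) ℝ) × (Fin d → ℝ) × ℝ)},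
      HasStrictFDerivAt Φ D1 pt → D1 = D2 → HasStrictFDerivAt Φ D2 pt :=
    fun hD h => h ▸ hD
  have hΦ' : HasStrictFDerivAt Φ (Deq : ((Matrix (Fin d) (Fin d) ℝ) × ℝ × (Fin d → ℝ)) →L[ℝ] ((Matrix (Fin d) (Fin d) ℝ) × (Fin d → ℝ) × ℝ)) pt := by
    refine repl hΦ0 ?_
    apply ContinuousLinearMap.ext
    intro p
    rfl
  have hΦpt : Φ pt = ((Mg Q lam, 0, 1) : Matrix (Fin d) (Fin d) ℝ × (Fin d → ℝ) × ℝ) := by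
    have hcq : Mg Q lam *ᵥ q = lam r • q := by
      rw [hqdef]; exact Mg_mulVec hQ1 lam r
    refine Prod.ext rfl (Prod.ext ?_ ?_)
    · show mulVecCLM d (Mg Q lam) q - ContinuousLinearMap.lsmul ℝ ℝ (lam r) q = 0
      simp [hcq]
    · show dotCLM q q = 1
      rw [dotCLM_apply, hqdef, q_dot_q hQ1]
      simp
  set ψ0 := hΦ'.localInverse Φ Deq pt with hψ0
  set ι : Matrix (Fin d) (Fin d) ℝ → Matrix (Fin d) (Fin d) ℝ × (Fin d → ℝ) × ℝ :=
    fun A => (A, 0, 1) with hιdef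
  have hιs : HasStrictFDerivAt ι
      ((ContinuousLinearMap.id ℝ (Matrix (Fin d) (Fin d) ℝ)).prod 0) (Mg Q lam) :=
    (hasStrictFDerivAt_id _).prodMk (hasStrictFDerivAt_const _ _)
  have hιpt : ι (Mg Q lam) = Φ pt := hΦpt.symm
  have hψc : ψ0 (ι (Mg Q lam)) = pt := by
    rw [hιpt]
    exact hΦ'.localInverse_apply_image
  have hloc' : HasStrictFDerivAt ψ0
      ((Deq.symm : (Matrix (Fin d) (Fin d) ℝ × (Fin d → ℝ) × ℝ) →L[ℝ]
        (Matrix (Fin d) (Fin d) ℝ × ℝ × (Fin d → ℝ)))) (ι (Mg Q lam)) := by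
    rw [hιpt]
    exact hΦ'.to_localInverse
  have hψstrict := hloc'.comp (Mg Q lam) hιs
  have hS22pt : HasStrictFDerivAt
      (fun p : Matrix (Fin d) (Fin d) ℝ × ℝ × (Fin d → ℝ) => p.2.2)
      ((ContinuousLinearMap.snd ℝ ℝ (Fin d → ℝ)).comp
        (ContinuousLinearMap.snd ℝ (Matrix (Fin d) (Fin d) ℝ) (ℝ × (Fin d → ℝ))))
      (ψ0 (ι (Mg Q lam))) :=
    hasStrictFDerivAt_snd.comp _ hasStrictFDerivAt_snd
  have hS21pt : HasStrictFDerivAt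
      (fun p : Matrix (Fin d) (Fin d) ℝ × ℝ × (Fin d → ℝ) => p.2.1)
      ((ContinuousLinearMap.fst ℝ ℝ (Fin d → ℝ)).comp
        (ContinuousLinearMap.snd ℝ (Matrix (Fin d) (Fin d) ℝ) (ℝ × (Fin d → ℝ))))
      (ψ0 (ι (Mg Q lam))) :=
    hasStrictFDerivAt_fst.comp _ hasStrictFDerivAt_snd
  have hfstrict := hS22pt.comp (Mg Q lam) hψstrict
  have hlamstrict := hS21pt.comp (Mg Q lam) hψstrict
  refine ⟨fun A => (ψ0 (ι A)).2.1, fun A => (ψ0 (ι A)).2.2, ?_, ?_, ?_, ?_, ?_, ?_⟩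
  · exact hlamstrict.differentiableAt
  · exact hfstrict.differentiableAt
  · show (ψ0 (ι (Mg Q lam))).2.1 = lam r
    rw [hψc]
  · intro i
    show (ψ0 (ι (Mg Q lam))).2.2 i = Q i r
    rw [hψc]
  · have hev0 := hΦ'.eventually_right_inverse
    have htend : Filter.Tendsto ι (nhds (Mg Q lam)) (nhds (Φ pt)) := by
      rw [← hιpt]
      exact hιs.continuousAt
    have hev1 : ∀ᶠ A in nhds (Mg Q lam), Φ (ψ0 (ι A)) = ι A := htend.eventually hev0
    filter_upwards [hev1] with A hA _hsymmA
    have hA1 : (ψ0 (ι A)).1 = A := congrArg Prod.fst hA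
    have hA2 : mulVecCLM d (ψ0 (ι A)).1 (ψ0 (ι A)).2.2
        - ContinuousLinearMap.lsmul ℝ ℝ (ψ0 (ι A)).2.1 (ψ0 (ι A)).2.2 = 0 :=
      congrArg (fun w => w.2.1) hA
    rw [hA1] at hA2
    simp only [mulVecCLM_apply, ContinuousLinearMap.lsmul_apply] at hA2
    exact sub_eq_zero.mp hA2
  · intro j k
    have hfd := hfstrict.hasFDerivAt.fderiv
    have hKE : ∀ E : Matrix (Fin d) (Fin d) ℝ,
        fderiv ℝ (fun A => (ψ0 (ι A)).2.2) (Mg Q lam) E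
          = -(Pmat Q lam r *ᵥ (E *ᵥ q)) := by
      intro E
      rw [show fderiv ℝ (fun A => (ψ0 (ι A)).2.2) (Mg Q lam) E = _ from congrArg (fun L => L E) hfd]
      have hsymmcoe : ∀ w, Deq.symm w = invFun0 (Pmat Q lam r) (fun i => Q i r) w := by
        intro w
        rw [hDeq]
        rw [show ((Leq hQ1 hQ2 hsimple).toContinuousLinearEquiv.symm w)
            = (Leq hQ1 hQ2 hsimple).symm w from congrFun
              (LinearEquiv.coe_toContinuousLinearEquiv_symm' _) w]
        rw [Leq_symm_apply]
      change (Deq.symm (E, 0, 0)).2.2 = _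
      simp only [ContinuousLinearMap.comp_apply, ContinuousLinearEquiv.coe_coe,
        ContinuousLinearMap.prod_apply, ContinuousLinearMap.coe_id', id_eq,
        ContinuousLinearMap.zero_apply, hsymmcoe, invFun0,
        ContinuousLinearMap.coe_snd', ContinuousLinearMap.coe_fst']
      rw [hqdef]
      simp [Matrix.mulVec_neg]
    refine ⟨?_, ?_⟩
    · intro P hP
      have hmp := mp_neg hQ1 hQ2 hsimple
      have hPeq : P = -(Pmat Q lam r) := mp_unique hP hmp
      rw [hPeq, hKE, Matrix.neg_mulVec]
    · rw [hKE]
      rw [hqdef]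
      exact sum_formula j k
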